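/- Let g : ℝᵐ → ℝ ∪ {+∞} be convex and lower semicontinuous, let F : ℝⁿ → ℝᵐ have continuously differentiable components, let x̄ ∈ ℝⁿ satisfy F(x̄) ∈ int(dom g), let Υ > 0, κ_G > 0, Δ̄ > 0, and for each Δ ∈ (0, Δ̄) let F̃_Δ : ℝⁿ → ℝᵐ have C¹ components with F̃_Δ(x̄) = F(x̄) and ‖∇F_i(y) − ∇F̃_{i,Δ}(y)‖ ≤ κ_G Δ^Υ for all i and all y ∈ B_Δ(x̄). Let M = sup{‖w‖ : w ∈ ∂g(F(x̄))} (finite since F(x̄) ∈ int(dom g)). Then for every Δ ∈ (0, Δ̄) and every ṽ ∈ ∇F̃_Δ(x̄)ᵀ ∂g(F(x̄)) there exists v ∈ ∇F(x̄)ᵀ ∂g(F(x̄)) with ‖v − ṽ‖ ≤ M √m κ_G Δ^Υ. -/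

import Mathlib

open Metric Set

/-- The (convex) subdifferential of an extended-real-valued function `g` at `z̄`:
`∂g(z̄) = {w : g(z) ≥ g(z̄) + ⟨w, z − z̄⟩ for all z}`. -/
def ERealSubdiff14 {m : ℕ} (g : EuclideanSpace ℝ (Fin m) → EReal)
    (zbar : EuclideanSpace ℝ (Fin m)) : Set (EuclideanSpace ℝ (Fin m)) :=
  {w | ∀ z, g zbar + ((inner ℝ w (z - zbar) : ℝ) : EReal) ≤ g z}

lemma aux_l1_le_sqrt {m : ℕ} (w : EuclideanSpace ℝ (Fin m)) :
    ∑ i, |w i| ≤ Real.sqrt m * ‖w‖ := by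
  have h := sq_sum_le_card_mul_sum_sq (s := (Finset.univ : Finset (Fin m)))
    (f := fun i => |w i|)
  simp only [Finset.card_univ, Fintype.card_fin, sq_abs] at h
  have hnorm : ‖w‖ = Real.sqrt (∑ i, w i ^ 2) := by
    rw [EuclideanSpace.norm_eq]
    congr 1
    exact Finset.sum_congr rfl fun i _ => by rw [Real.norm_eq_abs, sq_abs]
  have h1 : (∑ i, |w i|) = Real.sqrt ((∑ i, |w i|) ^ 2) :=
    (Real.sqrt_sq (by positivity)).symm
  rw [h1, hnorm, ← Real.sqrt_mul (by positivity)]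
  exact Real.sqrt_le_sqrt (by exact_mod_cast h)

lemma subdiff_bddAbove {m : ℕ} (g : EuclideanSpace ℝ (Fin m) → EReal)
    (hgbot : ∀ z, g z ≠ ⊥)
    (hconv : Convex ℝ {p : EuclideanSpace ℝ (Fin m) × ℝ | g p.1 ≤ (p.2 : EReal)})
    (zbar : EuclideanSpace ℝ (Fin m))
    (hdom : zbar ∈ interior {z | g z < ⊤}) :
    BddAbove ((fun w => ‖w‖) '' ERealSubdiff14 g zbar) := by
  set D : Set (EuclideanSpace ℝ (Fin m)) := {z | g z < ⊤} with hD
  set f : EuclideanSpace ℝ (Fin m) → ℝ := fun z => (g z).toReal with hf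
  have hgf : ∀ z ∈ D, g z = ((f z : ℝ) : EReal) := fun z hz =>
    (EReal.coe_toReal hz.out.ne (hgbot z)).symm
  -- convexity of D
  have hDconv : Convex ℝ D := by
    intro z₁ h₁ z₂ h₂ a b ha hb hab
    have e₁ : ((z₁, f z₁) : EuclideanSpace ℝ (Fin m) × ℝ) ∈
        {p : EuclideanSpace ℝ (Fin m) × ℝ | g p.1 ≤ (p.2 : EReal)} :=
      le_of_eq (hgf z₁ h₁)
    have e₂ : ((z₂, f z₂) : EuclideanSpace ℝ (Fin m) × ℝ) ∈
        {p : EuclideanSpace ℝ (Fin m) × ℝ | g p.1 ≤ (p.2 : EReal)} :=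
      le_of_eq (hgf z₂ h₂)
    have := hconv e₁ e₂ ha hb hab
    exact lt_of_le_of_lt this (EReal.coe_lt_top _)
  -- convexity of g on D as inequality
  have hkey : ∀ z₁ ∈ D, ∀ z₂ ∈ D, ∀ a b : ℝ, 0 ≤ a → 0 ≤ b → a + b = 1 →
      g (a • z₁ + b • z₂) ≤ ((a * f z₁ + b * f z₂ : ℝ) : EReal) := by
    intro z₁ h₁ z₂ h₂ a b ha hb hab
    have e₁ : ((z₁, f z₁) : EuclideanSpace ℝ (Fin m) × ℝ) ∈
        {p : EuclideanSpace ℝ (Fin m) × ℝ | g p.1 ≤ (p.2 : EReal)} :=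
      le_of_eq (hgf z₁ h₁)
    have e₂ : ((z₂, f z₂) : EuclideanSpace ℝ (Fin m) × ℝ) ∈
        {p : EuclideanSpace ℝ (Fin m) × ℝ | g p.1 ≤ (p.2 : EReal)} :=
      le_of_eq (hgf z₂ h₂)
    exact hconv e₁ e₂ ha hb hab
  set U := interior D with hU
  have hUD : U ⊆ D := interior_subset
  have hUconv : Convex ℝ U := hDconv.interior
  have hfconv : ConvexOn ℝ U f := by
    refine ⟨hUconv, fun x hx y hy a b ha hb hab => ?_⟩
    have hxy : a • x + b • y ∈ U := hUconv hx hy ha hb hab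
    have h1 := hkey x (hUD hx) y (hUD hy) a b ha hb hab
    rw [hgf _ (hUD hxy)] at h1
    exact_mod_cast h1
  have hcont : ContinuousOn f U := hfconv.continuousOn isOpen_interior
  have hca : ContinuousAt f zbar :=
    hcont.continuousAt (isOpen_interior.mem_nhds hdom)
  have hev : ∀ᶠ z in nhds zbar, f z ≤ f zbar + 1 ∧ z ∈ U := by
    filter_upwards [hca.eventually_le_const (by linarith : f zbar < f zbar + 1),
      isOpen_interior.mem_nhds hdom] with z h1 h2 using ⟨h1, h2⟩
  obtain ⟨ε, hε, hball⟩ := Metric.eventually_nhds_iff.mp hev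
  refine ⟨2 / ε, ?_⟩
  rintro y ⟨w, hw, rfl⟩
  rcases eq_or_ne w 0 with rfl | hw0
  · simp; positivity
  · have hwpos : 0 < ‖w‖ := norm_pos_iff.mpr hw0
    set z : EuclideanSpace ℝ (Fin m) := zbar + (ε / 2 / ‖w‖) • w with hz
    have hzball : dist z zbar < ε := by
      rw [dist_eq_norm]
      simp only [hz, add_sub_cancel_left, norm_smul, Real.norm_eq_abs]
      rw [abs_of_pos (by positivity)]
      rw [div_mul_cancel₀ _ hwpos.ne']
      linarith
    obtain ⟨hfz, hzU⟩ := hball hzball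
    have hinner : (inner ℝ w (z - zbar) : ℝ) = ε / 2 * ‖w‖ := by
      simp only [hz, add_sub_cancel_left]
      rw [real_inner_smul_right, real_inner_self_eq_norm_sq]
      field_simp
    have h1 := hw z
    rw [hgf zbar (hUD hdom), hgf z (hUD hzU), hinner, ← EReal.coe_add,
      EReal.coe_le_coe_iff] at h1
    have h2 : ε / 2 * ‖w‖ ≤ 1 := by linarith
    show ‖w‖ ≤ 2 / ε
    rw [le_div_iff₀ hε]
    nlinarith

/-- Extension of the subdifferential approximation theorem (reverse direction) to models with
gradient error of order `Δ^Υ` (e.g. fully quadratic models, `Υ = 2`): for every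
`ṽ ∈ ∇F̃_Δ(x̄)ᵀ ∂g(F(x̄))` there exists `v ∈ ∇F(x̄)ᵀ ∂g(F(x̄))` with
`‖v − ṽ‖ ≤ M √m κG Δ^Υ`. -/
theorem subdifferential_approximation_order_bwd {n m : ℕ}
    (g : EuclideanSpace ℝ (Fin m) → EReal)
    (hgbot : ∀ z, g z ≠ ⊥)
    (hconv : Convex ℝ {p : EuclideanSpace ℝ (Fin m) × ℝ | g p.1 ≤ (p.2 : EReal)})
    (hlsc : IsClosed {p : EuclideanSpace ℝ (Fin m) × ℝ | g p.1 ≤ (p.2 : EReal)})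
    (F : Fin m → EuclideanSpace ℝ (Fin n) → ℝ)
    (hF : ∀ i, ContDiff ℝ 1 (F i))
    (xbar : EuclideanSpace ℝ (Fin n))
    (hdom : (WithLp.toLp 2 (fun i => F i xbar) : EuclideanSpace ℝ (Fin m)) ∈ interior {z | g z < ⊤})
    (Υ κG Δbar : ℝ) (hΥ : 0 < Υ) (hκG : 0 < κG) (hΔbar : 0 < Δbar)
    (Ft : ℝ → Fin m → EuclideanSpace ℝ (Fin n) → ℝ)
    (hFtC1 : ∀ Δ ∈ Ioo (0:ℝ) Δbar, ∀ i, ContDiff ℝ 1 (Ft Δ i))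
    (hcenter : ∀ Δ ∈ Ioo (0:ℝ) Δbar, ∀ i, Ft Δ i xbar = F i xbar)
    (hgrad : ∀ Δ ∈ Ioo (0:ℝ) Δbar, ∀ i, ∀ y ∈ ball xbar Δ,
      ‖gradient (F i) y - gradient (Ft Δ i) y‖ ≤ κG * Δ ^ Υ)
    (M : ℝ)
    (hM : M = sSup ((fun w => ‖w‖) ''
      ERealSubdiff14 g (WithLp.toLp 2 (fun i => F i xbar) : EuclideanSpace ℝ (Fin m)))) :
    ∀ Δ ∈ Ioo (0:ℝ) Δbar,
      ∀ vt ∈ (fun w : EuclideanSpace ℝ (Fin m) => ∑ i, w i • gradient (Ft Δ i) xbar) ''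
        ERealSubdiff14 g (WithLp.toLp 2 (fun i => F i xbar) : EuclideanSpace ℝ (Fin m)),
      ∃ v ∈ (fun w : EuclideanSpace ℝ (Fin m) => ∑ i, w i • gradient (F i) xbar) ''
        ERealSubdiff14 g (WithLp.toLp 2 (fun i => F i xbar) : EuclideanSpace ℝ (Fin m)),
      ‖v - vt‖ ≤ M * Real.sqrt m * κG * Δ ^ Υ := by
  intro Δ hΔ vt hvt
  obtain ⟨w, hw, rfl⟩ := hvt
  refine ⟨∑ i, w i • gradient (F i) xbar, ⟨w, hw, rfl⟩, ?_⟩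
  have hbdd := subdiff_bddAbove g hgbot hconv _ hdom
  have hwM : ‖w‖ ≤ M := hM ▸ le_csSup hbdd ⟨w, hw, rfl⟩
  have hΔpow : 0 < Δ ^ Υ := Real.rpow_pos_of_pos hΔ.1 Υ
  have hdiff : ∀ i : Fin m,
      ‖gradient (F i) xbar - gradient (Ft Δ i) xbar‖ ≤ κG * Δ ^ Υ :=
    fun i => hgrad Δ hΔ i xbar (mem_ball_self hΔ.1)
  calc ‖(∑ i, w i • gradient (F i) xbar) - ∑ i, w i • gradient (Ft Δ i) xbar‖
      = ‖∑ i, w i • (gradient (F i) xbar - gradient (Ft Δ i) xbar)‖ := by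
        rw [← Finset.sum_sub_distrib]
        simp [smul_sub]
    _ ≤ ∑ i, ‖w i • (gradient (F i) xbar - gradient (Ft Δ i) xbar)‖ :=
        norm_sum_le _ _
    _ ≤ ∑ i, |w i| * (κG * Δ ^ Υ) := by
        refine Finset.sum_le_sum fun i _ => ?_
        rw [norm_smul, Real.norm_eq_abs]
        exact mul_le_mul_of_nonneg_left (hdiff i) (abs_nonneg _)
    _ = (∑ i, |w i|) * (κG * Δ ^ Υ) := by rw [Finset.sum_mul]
    _ ≤ (Real.sqrt m * ‖w‖) * (κG * Δ ^ Υ) := by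
        gcongr
        exact aux_l1_le_sqrt w
    _ ≤ (Real.sqrt m * M) * (κG * Δ ^ Υ) := by
        gcongr
    _ = M * Real.sqrt m * κG * Δ ^ Υ := by ring
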